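/- With Θ, Θ_*, V, S as in the ridge regression setup, tr[(Θ_* - Θ) V (Θ_* - Θ)^T] ≤ (‖Θ_*‖_{V^{-1}} + ‖S‖_{V^{-1}})² where ‖X‖_{V^{-1}}² := tr(X^T V^{-1} X), ‖Θ_*‖_{V^{-1}} uses Θ_*^T. -/

import Mathlib

open Matrix Finset

section Aux

variable {p d : ℕ}

open scoped MatrixOrder

lemma trace_transpose_mul_eq (X Y : Matrix (Fin p) (Fin d) ℝ) :
    Matrix.trace (Xᵀ * Y) = ∑ ij : Fin p × Fin d, X ij.1 ij.2 * Y ij.1 ij.2 := by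
  rw [Matrix.trace, Fintype.sum_prod_type]
  simp only [Matrix.diag, Matrix.mul_apply, Matrix.transpose_apply]
  rw [Finset.sum_comm]

lemma trace_transpose_mul_self_nonneg (X : Matrix (Fin p) (Fin d) ℝ) :
    0 ≤ Matrix.trace (Xᵀ * X) := by
  rw [trace_transpose_mul_eq]
  exact Finset.sum_nonneg fun ij _ => mul_self_nonneg _

lemma frob_cs (X Y : Matrix (Fin p) (Fin d) ℝ) :
    Matrix.trace (Xᵀ * Y) ≤
      Real.sqrt (Matrix.trace (Xᵀ * X)) * Real.sqrt (Matrix.trace (Yᵀ * Y)) := by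
  have h := Finset.sum_mul_sq_le_sq_mul_sq Finset.univ
    (fun ij : Fin p × Fin d => X ij.1 ij.2) (fun ij : Fin p × Fin d => Y ij.1 ij.2)
  rw [trace_transpose_mul_eq, trace_transpose_mul_eq, trace_transpose_mul_eq]
  calc ∑ ij : Fin p × Fin d, X ij.1 ij.2 * Y ij.1 ij.2
      ≤ |∑ ij : Fin p × Fin d, X ij.1 ij.2 * Y ij.1 ij.2| := le_abs_self _
    _ = Real.sqrt ((∑ ij : Fin p × Fin d, X ij.1 ij.2 * Y ij.1 ij.2) ^ 2) := by
        rw [Real.sqrt_sq_eq_abs]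
    _ ≤ Real.sqrt ((∑ ij : Fin p × Fin d, X ij.1 ij.2 ^ 2) *
          ∑ ij : Fin p × Fin d, Y ij.1 ij.2 ^ 2) := Real.sqrt_le_sqrt h
    _ = _ := by
        rw [Real.sqrt_mul (Finset.sum_nonneg fun ij _ => sq_nonneg _)]
        simp only [sq]

lemma psd_inner_expand {M : Matrix (Fin p) (Fin p) ℝ} (hM : M.PosSemidef)
    (A : Matrix (Fin p) (Fin d) ℝ) :
    Aᵀ * M * A = (CFC.sqrt M * A)ᵀ * (CFC.sqrt M * A) := by
  have hCt : (CFC.sqrt M)ᵀ = CFC.sqrt M := by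
    have h := (CFC.sqrt_nonneg M).posSemidef.1
    simpa [Matrix.IsHermitian, Matrix.conjTranspose_eq_transpose_of_trivial] using h
  conv_lhs => rw [← CFC.sqrt_mul_sqrt_self M hM.nonneg]
  simp only [Matrix.transpose_mul, hCt, Matrix.mul_assoc]

lemma psd_inner_expand₂ {M : Matrix (Fin p) (Fin p) ℝ} (hM : M.PosSemidef)
    (A B : Matrix (Fin p) (Fin d) ℝ) :
    Aᵀ * M * B = (CFC.sqrt M * A)ᵀ * (CFC.sqrt M * B) := by
  have hCt : (CFC.sqrt M)ᵀ = CFC.sqrt M := by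
    have h := (CFC.sqrt_nonneg M).posSemidef.1
    simpa [Matrix.IsHermitian, Matrix.conjTranspose_eq_transpose_of_trivial] using h
  conv_lhs => rw [← CFC.sqrt_mul_sqrt_self M hM.nonneg]
  simp only [Matrix.transpose_mul, hCt, Matrix.mul_assoc]

lemma psd_trace_nonneg {M : Matrix (Fin p) (Fin p) ℝ} (hM : M.PosSemidef)
    (A : Matrix (Fin p) (Fin d) ℝ) : 0 ≤ Matrix.trace (Aᵀ * M * A) := by
  rw [psd_inner_expand hM]
  exact trace_transpose_mul_self_nonneg _

lemma psd_cs {M : Matrix (Fin p) (Fin p) ℝ} (hM : M.PosSemidef)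
    (A B : Matrix (Fin p) (Fin d) ℝ) :
    Matrix.trace (Aᵀ * M * B) ≤
      Real.sqrt (Matrix.trace (Aᵀ * M * A)) * Real.sqrt (Matrix.trace (Bᵀ * M * B)) := by
  rw [psd_inner_expand₂ hM, psd_inner_expand hM A, psd_inner_expand hM B]
  exact frob_cs _ _

end Aux

/-- Ridge regression confidence bound:
`tr[(Θ_* - Θ) V (Θ_* - Θ)ᵀ] ≤ (‖Θ_*‖_{V⁻¹} + ‖S‖_{V⁻¹})²`, where
`‖X‖_{V⁻¹} := sqrt (tr (Xᵀ V⁻¹ X))` (using `Θ_*ᵀ` for the first norm). -/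
theorem ridge_regression_error_bound {d p n : ℕ}
    (Θstar : Matrix (Fin d) (Fin p) ℝ)
    (z : Fin n → (Fin p → ℝ)) (w : Fin n → (Fin d → ℝ))
    (V : Matrix (Fin p) (Fin p) ℝ)
    (hV : V = 1 + ∑ i : Fin n, vecMulVec (z i) (z i))
    (S : Matrix (Fin p) (Fin d) ℝ)
    (hS : S = ∑ i : Fin n, vecMulVec (z i) (w i))
    (Θ : Matrix (Fin d) (Fin p) ℝ)
    (hΘ : Θᵀ = V⁻¹ * ∑ i : Fin n, vecMulVec (z i) (Θstar *ᵥ z i + w i)) :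
    Matrix.trace ((Θstar - Θ) * V * (Θstar - Θ)ᵀ)
      ≤ (Real.sqrt (Matrix.trace (Θstar * V⁻¹ * Θstarᵀ))
          + Real.sqrt (Matrix.trace (Sᵀ * V⁻¹ * S))) ^ 2 := by
  -- V is positive definite
  have hVpd : V.PosDef := by
    rw [hV]
    refine Matrix.PosDef.add_posSemidef Matrix.PosDef.one ?_
    refine Finset.sum_induction _ Matrix.PosSemidef
      (fun a b ha hb => ha.add hb) Matrix.PosSemidef.zero (fun i _ => ?_)
    refine Matrix.PosSemidef.of_dotProduct_mulVec_nonneg ?_ ?_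
    · ext a b
      simp [Matrix.conjTranspose, Matrix.vecMulVec_apply, mul_comm]
    · intro x
      have : (star x) ⬝ᵥ (vecMulVec (z i) (z i) *ᵥ x) = (z i ⬝ᵥ x) * (z i ⬝ᵥ x) := by
        simp only [Matrix.mulVec, Matrix.vecMulVec_apply, dotProduct, star_trivial]
        rw [Finset.sum_mul_sum]
        refine Finset.sum_congr rfl fun a _ => ?_
        rw [Finset.mul_sum]
        exact Finset.sum_congr rfl fun b _ => by ring
      rw [this]
      exact mul_self_nonneg _
  have hVunit : IsUnit V.det := hVpd.det_pos.ne'.isUnit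
  have hinvV : V⁻¹ * V = 1 := Matrix.nonsing_inv_mul V hVunit
  have hVinv : V * V⁻¹ = 1 := Matrix.mul_nonsing_inv V hVunit
  have hVsym : Vᵀ = V := by
    have h := hVpd.isHermitian
    simpa [Matrix.IsHermitian, Matrix.conjTranspose_eq_transpose_of_trivial] using h
  have hVinvSym : V⁻¹ᵀ = V⁻¹ := by
    rw [Matrix.transpose_nonsing_inv, hVsym]
  -- key identity for the sum
  have hsum : (∑ i : Fin n, vecMulVec (z i) (Θstar *ᵥ z i + w i))
      = (∑ i : Fin n, vecMulVec (z i) (z i)) * Θstarᵀ + S := by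
    rw [hS, Matrix.sum_mul, ← Finset.sum_add_distrib]
    refine Finset.sum_congr rfl fun i _ => ?_
    ext a b
    simp only [Matrix.vecMulVec_apply, Matrix.mul_apply, Matrix.add_apply,
      Matrix.transpose_apply, Pi.add_apply, Matrix.mulVec, dotProduct]
    rw [mul_add, Finset.mul_sum]
    congr 1
    exact Finset.sum_congr rfl fun c _ => by ring
  -- Θ*ᵀ - Θᵀ = V⁻¹ (Θ*ᵀ - S)
  have hid : Θstarᵀ - Θᵀ = V⁻¹ * (Θstarᵀ - S) := by
    rw [hΘ, hsum]
    have h1 : (∑ i : Fin n, vecMulVec (z i) (z i)) = V - 1 := by rw [hV]; abel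
    rw [h1]
    rw [Matrix.mul_add, Matrix.sub_mul, Matrix.mul_sub, Matrix.mul_sub,
      ← Matrix.mul_assoc, hinvV]
    simp only [Matrix.one_mul, Matrix.mul_one]
    abel
  -- hence Θ* - Θ = (Θ* - Sᵀ) V⁻¹
  have hid' : Θstar - Θ = (Θstarᵀ - S)ᵀ * V⁻¹ := by
    have := congrArg Matrix.transpose hid
    rw [Matrix.transpose_sub, Matrix.transpose_transpose, Matrix.transpose_transpose,
      Matrix.transpose_mul, hVinvSym] at this
    exact this
  -- rewrite the LHS
  have hLHS : (Θstar - Θ) * V * (Θstar - Θ)ᵀ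
      = (Θstarᵀ - S)ᵀ * V⁻¹ * (Θstarᵀ - S) := by
    rw [hid']
    rw [Matrix.transpose_mul, hVinvSym, Matrix.transpose_transpose]
    calc (Θstarᵀ - S)ᵀ * V⁻¹ * V * (V⁻¹ * (Θstarᵀ - S))
        = (Θstarᵀ - S)ᵀ * (V⁻¹ * V * V⁻¹) * (Θstarᵀ - S) := by
          simp only [Matrix.mul_assoc]
      _ = (Θstarᵀ - S)ᵀ * V⁻¹ * (Θstarᵀ - S) := by rw [hinvV, Matrix.one_mul]
  rw [hLHS]
  set A := Θstarᵀ with hA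
  set B := S with hB
  set M := V⁻¹ with hM
  have hMpsd : M.PosSemidef := hVpd.inv.posSemidef
  -- expand trace
  have hexp : Matrix.trace ((A - B)ᵀ * M * (A - B))
      = Matrix.trace (Aᵀ * M * A) - Matrix.trace (Aᵀ * M * B)
        - Matrix.trace (Bᵀ * M * A) + Matrix.trace (Bᵀ * M * B) := by
    rw [Matrix.transpose_sub, Matrix.sub_mul, Matrix.sub_mul, Matrix.mul_sub, Matrix.mul_sub,
      Matrix.trace_sub, Matrix.trace_sub, Matrix.trace_sub]
    ring
  have hBA : Matrix.trace (Bᵀ * M * A) = Matrix.trace (Aᵀ * M * B) := by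
    rw [← Matrix.trace_transpose (Bᵀ * M * A)]
    congr 1
    have hMsym : Mᵀ = M := hVinvSym
    simp only [Matrix.transpose_mul, Matrix.transpose_transpose, hMsym, Matrix.mul_assoc]
  have hAt : Aᵀ = Θstar := by rw [hA, Matrix.transpose_transpose]
  set x := Matrix.trace (Aᵀ * M * A) with hx
  set y := Matrix.trace (Bᵀ * M * B) with hy
  have hxnn : 0 ≤ x := psd_trace_nonneg hMpsd A
  have hynn : 0 ≤ y := psd_trace_nonneg hMpsd B
  have hcs : -Matrix.trace (Aᵀ * M * B) ≤ Real.sqrt x * Real.sqrt y := by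
    have h := psd_cs hMpsd (-A) B
    simp only [Matrix.transpose_neg, Matrix.neg_mul, Matrix.mul_neg, neg_neg,
      Matrix.trace_neg] at h
    exact h
  have hRHSx : Matrix.trace (Θstar * M * A) = x := by rw [hx, hAt]
  rw [hexp, hBA, hRHSx]
  have hsq : (Real.sqrt x + Real.sqrt y) ^ 2
      = x + 2 * (Real.sqrt x * Real.sqrt y) + y := by
    rw [add_sq, Real.sq_sqrt hxnn, Real.sq_sqrt hynn]
    ring
  rw [hsq]
  linarith
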